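/- arXiv:2401.06912 — 4 statements merged into one kernel-verified Lean document; each statement's English description precedes it below -/
import Mathlib

section
/- For S = ⟨n₁, n₂, n₃⟩ and n ∈ S, the number of edges in the factorization support graph ∇_S(n) equals C(|Z_S(n)|,2) - |Z_{12}(n)||Z_3(n)| - |Z_{13}(n)||Z_2(n)| - |Z_{23}(n)||Z_1(n)| + |Z_1(n)||Z_2(n)| + |Z_1(n)||Z_3(n)| + |Z_2(n)||Z_3(n)|. -/
open Finset

namespace Stmt5Aux
variable {α : Type*} [DecidableEq α]
def s2f : Sym2 α → Finset α :=
  Sym2.lift ⟨fun a b => {a, b}, fun a b => by ext x; simp [or_comm]⟩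
@[simp] lemma s2f_mk (a b : α) : s2f s(a, b) = {a, b} := rfl
lemma card_image_sym2_product (s t : Finset α) (h : ∀ a ∈ s, ∀ b ∈ t, a ≠ b) :
    ((s ×ˢ t).image fun p => s(p.1, p.2)).card = s.card * t.card := by
  rw [Finset.card_image_of_injOn, Finset.card_product]
  rintro ⟨a, b⟩ hab ⟨c, d⟩ hcd he
  simp only [Finset.mem_coe, Finset.mem_product] at hab hcd
  simp only [Sym2.eq_iff] at he
  rcases he with ⟨rfl, rfl⟩ | ⟨rfl, rfl⟩
  · rfl
  · exact absurd rfl (h _ hab.1 _ hcd.2)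
lemma card_offdiag_sym2 (s : Finset α) :
    ((s.sym2).filter fun e => ¬ e.IsDiag).card = s.card.choose 2 := by
  rw [← Finset.card_powersetCard 2 s]
  apply Finset.card_nbij s2f
  · intro e he
    induction e using Sym2.ind with
    | _ a b =>
      simp only [Finset.mem_coe, Finset.mem_filter, Finset.mk_mem_sym2_iff, Sym2.mk_isDiag_iff] at he
      obtain ⟨⟨ha, hb⟩, hne⟩ := he
      rw [s2f_mk, Finset.mem_coe, Finset.mem_powersetCard]
      refine ⟨?_, Finset.card_pair hne⟩
      intro x hx
      rcases Finset.mem_insert.1 hx with rfl | hx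
      · exact ha
      · exact (Finset.mem_singleton.1 hx) ▸ hb
  · intro e he e' he' hee
    simp only [Finset.mem_coe, Finset.mem_filter] at he he'
    induction e using Sym2.ind with
    | _ a b =>
      induction e' using Sym2.ind with
      | _ c d =>
        simp only [Sym2.mk_isDiag_iff] at he he'
        have hab : a ≠ b := he.2
        simp only [s2f_mk] at hee
        have ha : a ∈ ({c, d} : Finset α) := hee ▸ Finset.mem_insert_self a {b}
        have hb : b ∈ ({c, d} : Finset α) := hee ▸ (by simp)
        simp only [Finset.mem_insert, Finset.mem_singleton] at ha hb
        rw [Sym2.eq_iff]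
        rcases ha with rfl | rfl
        · rcases hb with rfl | rfl
          · exact absurd rfl hab
          · exact Or.inl ⟨rfl, rfl⟩
        · rcases hb with rfl | rfl
          · exact Or.inr ⟨rfl, rfl⟩
          · exact absurd rfl hab
  · intro t ht
    simp only [Finset.mem_coe, Finset.mem_powersetCard] at ht
    obtain ⟨hsub, hcard⟩ := ht
    obtain ⟨a, b, hne, rfl⟩ := Finset.card_eq_two.1 hcard
    refine ⟨s(a, b), ?_, by simp⟩
    simp only [Finset.mem_coe, Finset.mem_filter, Finset.mk_mem_sym2_iff, Sym2.mk_isDiag_iff]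
    exact ⟨⟨hsub (by simp), hsub (by simp)⟩, hne⟩
end Stmt5Aux

open Stmt5Aux in
/-- for `S = ⟨n₁,n₂,n₃⟩`, the number of edges of `∇_S(n)` equals
`C(|Z_S(n)|,2) - |Z₁₂||Z₃| - |Z₁₃||Z₂| - |Z₂₃||Z₁| + |Z₁||Z₂| + |Z₁||Z₃| + |Z₂||Z₃|`. -/
theorem stmt5 (n1 n2 n3 : ℕ) (hpos : 0 < n1 ∧ 0 < n2 ∧ 0 < n3)
    (hmin : ∀ i : Fin 3, ∀ z : Fin 3 → ℕ,
      (z 0 * n1 + z 1 * n2 + z 2 * n3 = ![n1, n2, n3] i) →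
        z = fun j => if j = i then 1 else 0)
    (n : ℕ) (hn : ∃ z : Fin 3 → ℕ, z 0 * n1 + z 1 * n2 + z 2 * n3 = n)
    (Z : Finset (Fin 3) → Set (Fin 3 → ℕ))
    (hZ : ∀ I, Z I = {z : Fin 3 → ℕ |
      z 0 * n1 + z 1 * n2 + z 2 * n3 = n ∧ ∀ i ∉ I, z i = 0}) :
    ({e : Sym2 (Fin 3 → ℕ) | ∃ z z', e = s(z, z') ∧
        z ∈ Z Finset.univ ∧ z' ∈ Z Finset.univ ∧ z ≠ z' ∧
        ∃ i, z i ≠ 0 ∧ z' i ≠ 0}.ncard : ℤ) =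
      (((Z Finset.univ).ncard.choose 2 : ℤ)
        - (Z {0, 1}).ncard * (Z {2}).ncard
        - (Z {0, 2}).ncard * (Z {1}).ncard
        - (Z {1, 2}).ncard * (Z {0}).ncard
        + (Z {0}).ncard * (Z {1}).ncard
        + (Z {0}).ncard * (Z {2}).ncard
        + (Z {1}).ncard * (Z {2}).ncard) := by
  classical
  obtain ⟨hp1, hp2, hp3⟩ := hpos
  rcases Nat.eq_zero_or_pos n with hn0 | hnpos
  · -- degenerate case n = 0
    subst hn0
    have hZall : ∀ I, Z I = {fun _ => 0} := by
      intro I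
      rw [hZ]
      ext z
      simp only [Set.mem_setOf_eq, Set.mem_singleton_iff]
      constructor
      · rintro ⟨hs, -⟩
        funext i
        have h0 : z 0 * n1 = 0 := by omega
        have h1 : z 1 * n2 = 0 := by omega
        have h2 : z 2 * n3 = 0 := by omega
        have e0 : z 0 = 0 := by rcases Nat.mul_eq_zero.1 h0 with h | h; exact h; omega
        have e1 : z 1 = 0 := by rcases Nat.mul_eq_zero.1 h1 with h | h; exact h; omega
        have e2 : z 2 = 0 := by rcases Nat.mul_eq_zero.1 h2 with h | h; exact h; omega
        fin_cases i <;> assumption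
      · rintro rfl
        exact ⟨by simp, fun _ _ => rfl⟩
    have hE : {e : Sym2 (Fin 3 → ℕ) | ∃ z z', e = s(z, z') ∧
        z ∈ Z Finset.univ ∧ z' ∈ Z Finset.univ ∧ z ≠ z' ∧
        ∃ i, z i ≠ 0 ∧ z' i ≠ 0} = ∅ := by
      ext e
      simp only [Set.mem_setOf_eq, Set.mem_empty_iff_false, iff_false]
      rintro ⟨z, z', -, hz, hz', hne, -⟩
      rw [hZall] at hz hz'
      exact hne (hz.trans hz'.symm)
    rw [hE]
    simp [hZall, Set.ncard_singleton]
  · -- main case n > 0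
    -- bound on coordinates
    have hb : ∀ z : Fin 3 → ℕ, (z 0 * n1 + z 1 * n2 + z 2 * n3 = n) → ∀ i, z i < n + 1 := by
      intro z hz i
      have h0 : z 0 ≤ z 0 * n1 := Nat.le_mul_of_pos_right _ hp1
      have h1 : z 1 ≤ z 1 * n2 := Nat.le_mul_of_pos_right _ hp2
      have h2 : z 2 ≤ z 2 * n3 := Nat.le_mul_of_pos_right _ hp3
      have hi : i = 0 ∨ i = 1 ∨ i = 2 := by omega
      rcases hi with rfl | rfl | rfl <;> omega
    set ZU : Finset (Fin 3 → ℕ) :=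
      (Fintype.piFinset fun _ : Fin 3 => Finset.range (n+1)).filter
        (fun z => z 0 * n1 + z 1 * n2 + z 2 * n3 = n) with hZU
    have memZU : ∀ z : Fin 3 → ℕ, z ∈ ZU ↔ z 0 * n1 + z 1 * n2 + z 2 * n3 = n := by
      intro z
      simp only [hZU, Finset.mem_filter, Fintype.mem_piFinset, Finset.mem_range]
      exact ⟨fun h => h.2, fun h => ⟨hb z h, h⟩⟩
    set supp : (Fin 3 → ℕ) → Finset (Fin 3) :=
      fun z => Finset.univ.filter fun i => z i ≠ 0 with hsupp
    have mem_supp : ∀ z i, i ∈ supp z ↔ z i ≠ 0 := by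
      intro z i; simp [hsupp]
    -- nonempty support
    have hne_supp : ∀ z ∈ ZU, (supp z).Nonempty := by
      intro z hz
      rw [memZU] at hz
      by_contra h
      rw [Finset.not_nonempty_iff_eq_empty] at h
      have h0 : z 0 = 0 := by
        by_contra h0
        exact absurd (h ▸ (mem_supp z 0).2 h0) (Finset.notMem_empty _)
      have h1 : z 1 = 0 := by
        by_contra h1
        exact absurd (h ▸ (mem_supp z 1).2 h1) (Finset.notMem_empty _)
      have h2 : z 2 = 0 := by
        by_contra h2
        exact absurd (h ▸ (mem_supp z 2).2 h2) (Finset.notMem_empty _)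
      rw [h0, h1, h2] at hz
      simp at hz
      omega
    -- coercion of Z I
    have hZcard : ∀ I : Finset (Fin 3),
        (Z I).ncard = ((ZU.filter fun z => supp z ⊆ I)).card := by
      intro I
      rw [← Set.ncard_coe_finset]
      congr 1
      rw [hZ]
      ext z
      simp only [Set.mem_setOf_eq, Finset.coe_filter, memZU]
      constructor
      · rintro ⟨hs, h⟩
        refine ⟨hs, fun i hi => ?_⟩
        by_contra hiI
        exact ((mem_supp z i).1 hi) (h i hiI)
      · rintro ⟨hs, h⟩
        refine ⟨hs, fun i hiI => ?_⟩
        by_contra hzi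
        exact hiI (h ((mem_supp z i).2 hzi))
    -- exact-support counts
    set g : Finset (Fin 3) → ℕ := fun A => (ZU.filter fun z => supp z = A).card with hg
    -- singleton
    have hsing : ∀ i : Fin 3,
        ((ZU.filter fun z => supp z ⊆ {i})).card = g {i} := by
      intro i
      rw [hg]
      congr 1
      apply Finset.filter_congr
      intro z hz
      constructor
      · intro hsub
        obtain ⟨j, hj⟩ := hne_supp z hz
        have := hsub hj
        rw [Finset.mem_singleton] at this
        subst this
        apply Finset.Subset.antisymm hsub
        intro k hk
        rw [Finset.mem_singleton] at hk
        subst hk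
        exact hj
      · intro h; rw [h]
    -- pair decomposition
    have hpaircard : ∀ i j : Fin 3,
        ({i,j} : Finset (Fin 3)) ∉ ({{i},{j}} : Finset (Finset (Fin 3))) →
        ({i} : Finset (Fin 3)) ∉ ({{j}} : Finset (Finset (Fin 3))) →
        (∀ A : Finset (Fin 3), A.Nonempty → A ⊆ {i, j} →
          A ∈ ({{i, j}, {i}, {j}} : Finset (Finset (Fin 3)))) →
        ((ZU.filter fun z => supp z ⊆ ({i, j} : Finset (Fin 3)))).card
          = g {i,j} + g {i} + g {j} := by
      intro i j hnm1 hnm2 hcover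
      have hmaps : ((ZU.filter fun z => supp z ⊆ ({i, j} : Finset (Fin 3))) : Set (Fin 3 → ℕ)).MapsTo
          supp ({{i, j}, {i}, {j}} : Finset (Finset (Fin 3))) := by
        intro z hz
        rw [Finset.mem_coe] at hz
        exact hcover (supp z)
          (hne_supp z (Finset.mem_of_mem_filter z hz))
          ((Finset.mem_filter.1 hz).2)
      rw [Finset.card_eq_sum_card_fiberwise hmaps]
      rw [Finset.sum_insert hnm1, Finset.sum_insert hnm2, Finset.sum_singleton]
      have hfib : ∀ A : Finset (Fin 3), A ⊆ ({i,j} : Finset (Fin 3)) →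
          ((ZU.filter fun z => supp z ⊆ ({i, j} : Finset (Fin 3))).filter
            fun z => supp z = A) = ZU.filter fun z => supp z = A := by
        intro A hA
        rw [Finset.filter_filter]
        apply Finset.filter_congr
        intro z hz
        constructor
        · exact fun h => h.2
        · intro h; exact ⟨h ▸ hA, h⟩
      rw [hfib _ (by intro x hx; exact hx), hfib _ (by intro x hx; simp at hx; simp [hx]),
        hfib _ (by intro x hx; simp at hx; simp [hx])]
      simp only [hg]
      ring
    -- Sym2 machinery
    set P : Finset (Sym2 (Fin 3 → ℕ)) := ZU.sym2.filter (fun e => ¬ e.IsDiag) with hP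
    set Q : Sym2 (Fin 3 → ℕ) → Prop := fun e => ∃ i, ∀ w ∈ e, w i ≠ 0 with hQ
    set E : Finset (Sym2 (Fin 3 → ℕ)) := P.filter Q with hE
    set D : Finset (Sym2 (Fin 3 → ℕ)) := P.filter (fun e => ¬ Q e) with hD
    have hPE : E.card + D.card = ZU.card.choose 2 := by
      rw [hE, hD, Finset.card_filter_add_card_filter_not, hP, card_offdiag_sym2]
    have memD : ∀ a b : Fin 3 → ℕ, s(a, b) ∈ D ↔
        (a ∈ ZU ∧ b ∈ ZU ∧ a ≠ b ∧ ¬ ∃ i, a i ≠ 0 ∧ b i ≠ 0) := by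
      intro a b
      simp only [hD, hP, hQ, Finset.mem_filter, Finset.mk_mem_sym2_iff, Sym2.mk_isDiag_iff,
        Sym2.mem_iff, forall_eq_or_imp, forall_eq]
      tauto
    have memE : ∀ a b : Fin 3 → ℕ, s(a, b) ∈ E ↔
        (a ∈ ZU ∧ b ∈ ZU ∧ a ≠ b ∧ ∃ i, a i ≠ 0 ∧ b i ≠ 0) := by
      intro a b
      simp only [hE, hP, hQ, Finset.mem_filter, Finset.mk_mem_sym2_iff, Sym2.mk_isDiag_iff,
        Sym2.mem_iff, forall_eq_or_imp, forall_eq]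
      tauto
    have hEset : {e : Sym2 (Fin 3 → ℕ) | ∃ z z', e = s(z, z') ∧
        z ∈ Z Finset.univ ∧ z' ∈ Z Finset.univ ∧ z ≠ z' ∧
        ∃ i, z i ≠ 0 ∧ z' i ≠ 0} = (↑E : Set (Sym2 (Fin 3 → ℕ))) := by
      ext e
      simp only [Set.mem_setOf_eq, Finset.mem_coe]
      constructor
      · rintro ⟨z, z', rfl, hz, hz', hne, i, h1, h2⟩
        rw [hZ] at hz hz'
        exact (memE z z').2 ⟨(memZU z).2 hz.1, (memZU z').2 hz'.1, hne, i, h1, h2⟩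
      · intro he
        induction e using Sym2.ind with
        | _ a b =>
          obtain ⟨ha, hb, hne, i, h1, h2⟩ := (memE a b).1 he
          refine ⟨a, b, rfl, ?_, ?_, hne, i, h1, h2⟩
          · rw [hZ]
            exact ⟨(memZU a).1 ha, fun j hj => absurd (Finset.mem_univ j) hj⟩
          · rw [hZ]
            exact ⟨(memZU b).1 hb, fun j hj => absurd (Finset.mem_univ j) hj⟩
    set pats : Finset (Sym2 (Finset (Fin 3))) :=
      {s({0},{1}), s({0},{2}), s({1},{2}), s({0},{1,2}), s({1},{0,2}), s({2},{0,1})} with hpats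
    have hclass : ∀ A B : Finset (Fin 3), A.Nonempty → B.Nonempty → Disjoint A B →
        s(A, B) ∈ pats := by
      rw [hpats]; decide
    have hDmem : ∀ e ∈ D, Sym2.map supp e ∈ pats := by
      intro e he
      induction e using Sym2.ind with
      | _ a b =>
        obtain ⟨ha, hb, hne, hq⟩ := (memD a b).1 he
        rw [Sym2.map_pair_eq]
        apply hclass _ _ (hne_supp a ha) (hne_supp b hb)
        rw [Finset.disjoint_left]
        intro i hia hib
        exact hq ⟨i, (mem_supp a i).1 hia, (mem_supp b i).1 hib⟩
    have hDsum : D.card = ∑ p ∈ pats, (D.filter fun e => Sym2.map supp e = p).card :=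
      Finset.card_eq_sum_card_fiberwise hDmem
    have hfibD : ∀ A B : Finset (Fin 3), A.Nonempty → B.Nonempty → Disjoint A B →
        (D.filter fun e => Sym2.map supp e = s(A, B)).card = g A * g B := by
      intro A B hA hB hAB
      have hABne : A ≠ B := by
        rintro rfl
        exact hA.ne_empty (disjoint_self.1 hAB)
      have himg : (D.filter fun e => Sym2.map supp e = s(A, B)) =
          ((ZU.filter fun z => supp z = A) ×ˢ (ZU.filter fun z => supp z = B)).image
            fun p => s(p.1, p.2) := by
        ext e
        constructor
        · intro he
          induction e using Sym2.ind with
          | _ a b =>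
            obtain ⟨hd, hmap⟩ := Finset.mem_filter.1 he
            obtain ⟨ha, hb, hne, hq⟩ := (memD a b).1 hd
            rw [Sym2.map_pair_eq, Sym2.eq_iff] at hmap
            rcases hmap with ⟨h1, h2⟩ | ⟨h1, h2⟩
            · exact Finset.mem_image.2 ⟨(a, b), Finset.mem_product.2
                ⟨Finset.mem_filter.2 ⟨ha, h1⟩, Finset.mem_filter.2 ⟨hb, h2⟩⟩, rfl⟩
            · exact Finset.mem_image.2 ⟨(b, a), Finset.mem_product.2
                ⟨Finset.mem_filter.2 ⟨hb, h2⟩, Finset.mem_filter.2 ⟨ha, h1⟩⟩, Sym2.eq_swap⟩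
        · intro he
          obtain ⟨⟨a, b⟩, hmem, rfl⟩ := Finset.mem_image.1 he
          obtain ⟨ha', hb'⟩ := Finset.mem_product.1 hmem
          obtain ⟨ha, hsa⟩ := Finset.mem_filter.1 ha'
          obtain ⟨hb, hsb⟩ := Finset.mem_filter.1 hb'
          have hne : a ≠ b := fun h => hABne (by rw [← hsa, h, hsb])
          refine Finset.mem_filter.2 ⟨(memD a b).2 ⟨ha, hb, hne, ?_⟩,
            by rw [Sym2.map_pair_eq, hsa, hsb]⟩
          rintro ⟨i, h1, h2⟩
          exact Finset.disjoint_left.1 hAB (hsa ▸ (mem_supp a i).2 h1)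
            (hsb ▸ (mem_supp b i).2 h2)
      rw [himg, card_image_sym2_product]
      intro a ha b hb
      obtain ⟨-, hsa⟩ := Finset.mem_filter.1 ha
      obtain ⟨-, hsb⟩ := Finset.mem_filter.1 hb
      exact fun h => hABne (by rw [← hsa, h, hsb])
    have hDval : D.card = g {0} * g {1} + g {0} * g {2} + g {1} * g {2}
        + g {0} * g {1, 2} + g {1} * g {0, 2} + g {2} * g {0, 1} := by
      rw [hDsum, hpats]
      rw [Finset.sum_insert (by decide), Finset.sum_insert (by decide),
        Finset.sum_insert (by decide), Finset.sum_insert (by decide),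
        Finset.sum_insert (by decide), Finset.sum_singleton]
      rw [hfibD _ _ (by decide) (by decide) (by decide),
        hfibD _ _ (by decide) (by decide) (by decide),
        hfibD _ _ (by decide) (by decide) (by decide),
        hfibD _ _ (by decide) (by decide) (by decide),
        hfibD _ _ (by decide) (by decide) (by decide),
        hfibD _ _ (by decide) (by decide) (by decide)]
      ring
    -- assemble
    have hz0 : (Z {0}).ncard = g {0} := by rw [hZcard]; exact hsing 0
    have hz1 : (Z {1}).ncard = g {1} := by rw [hZcard]; exact hsing 1
    have hz2 : (Z {2}).ncard = g {2} := by rw [hZcard]; exact hsing 2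
    have hz01 : (Z {0, 1}).ncard = g {0, 1} + g {0} + g {1} := by
      rw [hZcard]; exact hpaircard 0 1 (by decide) (by decide) (by decide)
    have hz02 : (Z {0, 2}).ncard = g {0, 2} + g {0} + g {2} := by
      rw [hZcard]; exact hpaircard 0 2 (by decide) (by decide) (by decide)
    have hz12 : (Z {1, 2}).ncard = g {1, 2} + g {1} + g {2} := by
      rw [hZcard]; exact hpaircard 1 2 (by decide) (by decide) (by decide)
    have hzU : (Z Finset.univ).ncard = ZU.card := by
      rw [hZcard]
      congr 1
      apply Finset.filter_true_of_mem
      intro z _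
      exact Finset.subset_univ _
    rw [hEset, Set.ncard_coe_finset, hzU, hz01, hz02, hz12, hz0, hz1, hz2]
    have hEz : (E.card : ℤ) = (ZU.card.choose 2 : ℤ) - D.card := by omega
    have hDz : (D.card : ℤ) = (g {0} : ℤ) * g {1} + (g {0} : ℤ) * g {2}
        + (g {1} : ℤ) * g {2} + (g {0} : ℤ) * g {1, 2} + (g {1} : ℤ) * g {0, 2}
        + (g {2} : ℤ) * g {0, 1} := by exact_mod_cast hDval
    rw [hEz, hDz]
    push_cast
    ring
end

section
/- Let S = ⟨n₁,…,n_k⟩ be a numerical semigroup with factorization map φ, let n ∈ S, and let β ∈ S with n ≥ β. Fix a pair (t, t') ∈ ker φ with φ(t) = φ(t') = β and gcd(t,t') = 0. Then the map u ↦ (t + u, t' + u) is a bijection from Z_S(n - β) to the set of ordered pairs (z, z') ∈ Z_S(n)² whose direct trade is (t, t'). -/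
/-- for a trade `(t,t')` with `φ(t) = φ(t') = β` and `gcd(t,t') = 0`, the map
`u ↦ (t+u, t'+u)` is a bijection from `Z_S(n−β)` onto the ordered pairs of factorizations
of `n` whose direct trade is `(t,t')`. -/
theorem stmt10 (k : ℕ) (nn : Fin k → ℕ) (n β : ℕ) (hβn : β ≤ n)
    (hn : ∃ z : Fin k → ℕ, ∑ j, z j * nn j = n)
    (t t' : Fin k → ℕ)
    (ht : ∑ j, t j * nn j = β) (ht' : ∑ j, t' j * nn j = β)
    (hgcd : ∀ j, min (t j) (t' j) = 0) :
    Set.BijOn (fun u : Fin k → ℕ => ((fun j => t j + u j), (fun j => t' j + u j)))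
      {u : Fin k → ℕ | ∑ j, u j * nn j = n - β}
      {p : (Fin k → ℕ) × (Fin k → ℕ) |
        (∑ j, p.1 j * nn j = n) ∧ (∑ j, p.2 j * nn j = n) ∧
        (fun j => p.1 j - min (p.1 j) (p.2 j)) = t ∧
        (fun j => p.2 j - min (p.1 j) (p.2 j)) = t'} := by
  have hmin : ∀ (u : Fin k → ℕ) j, min (t j + u j) (t' j + u j) = u j := by
    intro u j
    have := hgcd j
    omega
  constructor
  · intro u hu
    simp only [Set.mem_setOf_eq] at hu ⊢
    refine ⟨?_, ?_, ?_, ?_⟩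
    · rw [show (∑ j, (t j + u j) * nn j) = (∑ j, t j * nn j) + ∑ j, u j * nn j by
        rw [← Finset.sum_add_distrib]; congr 1; ext j; ring]
      omega
    · rw [show (∑ j, (t' j + u j) * nn j) = (∑ j, t' j * nn j) + ∑ j, u j * nn j by
        rw [← Finset.sum_add_distrib]; congr 1; ext j; ring]
      omega
    · funext j; rw [hmin u j]; omega
    · funext j; rw [hmin u j]; omega
  constructor
  · intro u _ v _ h
    funext j
    have := congrFun (congrArg Prod.fst h) j
    simp at this
    omega
  · intro p hp
    obtain ⟨h1, h2, h3, h4⟩ := hp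
    set u : Fin k → ℕ := fun j => min (p.1 j) (p.2 j) with hu
    have e1 : ∀ j, p.1 j = t j + u j := by
      intro j
      have := congrFun h3 j
      simp only [hu] at this ⊢
      omega
    have e2 : ∀ j, p.2 j = t' j + u j := by
      intro j
      have := congrFun h4 j
      simp only [hu] at this ⊢
      omega
    refine ⟨u, ?_, ?_⟩
    · simp only [Set.mem_setOf_eq]
      have : ∑ j, p.1 j * nn j = (∑ j, t j * nn j) + ∑ j, u j * nn j := by
        rw [← Finset.sum_add_distrib]; congr 1; ext j; rw [e1 j]; ring
      omega
    · ext j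
      · simpa using (e1 j).symm
      · simpa using (e2 j).symm
end

section
/- For S = ⟨6, 9, 20⟩, the set ρ = {((3,0,0),(0,2,0)), ((4,4,0),(0,0,3))} is a presentation of S: any two factorizations of any n ∈ S are connected by a sequence of trades from ρ. -/
def Nval (z : Fin 3 → ℕ) : ℕ := 6 * z 0 + 9 * z 1 + 20 * z 2

def Step (z z' : Fin 3 → ℕ) : Prop :=
  ((fun j => z j - min (z j) (z' j)) = ![3, 0, 0] ∧
    (fun j => z' j - min (z j) (z' j)) = ![0, 2, 0]) ∨
  ((fun j => z j - min (z j) (z' j)) = ![0, 2, 0] ∧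
    (fun j => z' j - min (z j) (z' j)) = ![3, 0, 0]) ∨
  ((fun j => z j - min (z j) (z' j)) = ![4, 4, 0] ∧
    (fun j => z' j - min (z j) (z' j)) = ![0, 0, 3]) ∨
  ((fun j => z j - min (z j) (z' j)) = ![0, 0, 3] ∧
    (fun j => z' j - min (z j) (z' j)) = ![4, 4, 0])

lemma step_N {z z' : Fin 3 → ℕ} (h : Step z z') : Nval z = Nval z' := by
  unfold Nval
  rcases h with ⟨h1, h2⟩ | ⟨h1, h2⟩ | ⟨h1, h2⟩ | ⟨h1, h2⟩ <;>
  · have a0 := congrFun h1 0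
    have a1 := congrFun h1 1
    have a2 := congrFun h1 2
    have b0 := congrFun h2 0
    have b1 := congrFun h2 1
    have b2 := congrFun h2 2
    simp [Matrix.cons_val_zero, Matrix.cons_val_one, Matrix.head_cons] at a0 a1 a2 b0 b1 b2
    omega

lemma step_symm : Symmetric Step := by
  intro z z' h
  unfold Step at *
  have e1 : (fun j => z' j - min (z' j) (z j)) = fun j => z' j - min (z j) (z' j) :=
    funext fun j => by rw [min_comm]
  have e2 : (fun j => z j - min (z' j) (z j)) = fun j => z j - min (z j) (z' j) :=
    funext fun j => by rw [min_comm]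
  rw [e1, e2]
  tauto

lemma step1 (z : Fin 3 → ℕ) (h : 3 ≤ z 0) : Step z ![z 0 - 3, z 1 + 2, z 2] := by
  left
  constructor <;> funext j <;> fin_cases j <;> simp <;> omega

lemma step2 (z : Fin 3 → ℕ) (h : 3 ≤ z 2) : Step z ![z 0 + 4, z 1 + 4, z 2 - 3] := by
  right; right; right
  constructor <;> funext j <;> fin_cases j <;> simp <;> omega

def Reach : (Fin 3 → ℕ) → (Fin 3 → ℕ) → Prop := Relation.ReflTransGen Step

lemma reach_N {z z' : Fin 3 → ℕ} (h : Reach z z') : Nval z = Nval z' := by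
  induction h with
  | refl => rfl
  | tail _ hstep ih => exact ih.trans (step_N hstep)

lemma normalize_aux : ∀ n (z : Fin 3 → ℕ), 9 * z 2 + z 0 = n →
    ∃ z', Reach z z' ∧ z' 0 < 3 ∧ z' 2 < 3 := by
  intro n
  induction n using Nat.strong_induction_on with
  | _ n ih =>
    intro z hz
    by_cases h0 : 3 ≤ z 0
    · have key := ih (9 * z 2 + (z 0 - 3)) (by omega) ![z 0 - 3, z 1 + 2, z 2] (by simp)
      obtain ⟨z', hr, hb⟩ := key
      exact ⟨z', Relation.ReflTransGen.head (step1 z h0) hr, hb⟩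
    · by_cases h2 : 3 ≤ z 2
      · have key := ih (9 * (z 2 - 3) + (z 0 + 4)) (by omega) ![z 0 + 4, z 1 + 4, z 2 - 3]
          (by simp)
        obtain ⟨z', hr, hb⟩ := key
        exact ⟨z', Relation.ReflTransGen.head (step2 z h2) hr, hb⟩
      · exact ⟨z, Relation.ReflTransGen.refl, by omega, by omega⟩

lemma myNormalize (z : Fin 3 → ℕ) : ∃ z', Reach z z' ∧ z' 0 < 3 ∧ z' 2 < 3 :=
  normalize_aux _ z rfl

lemma chain_of_reach {z z' : Fin 3 → ℕ} (h : Reach z z') :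
    ∃ (l : ℕ) (w : Fin (l + 1) → Fin 3 → ℕ), w 0 = z ∧ w (Fin.last l) = z' ∧
      ∀ a : Fin l, Step (w a.castSucc) (w a.succ) := by
  induction h with
  | refl => exact ⟨0, fun _ => z, rfl, rfl, fun a => a.elim0⟩
  | @tail b c _ hstep ih =>
    obtain ⟨l, w, h0, hl, hs⟩ := ih
    refine ⟨l + 1, Fin.snoc w c, ?_, ?_, ?_⟩
    · rw [show (0 : Fin (l + 2)) = Fin.castSucc 0 by simp, Fin.snoc_castSucc]; exact h0
    · simp
    · intro a
      refine Fin.lastCases ?_ (fun i => ?_) a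
      · rw [Fin.succ_last, Fin.snoc_last, Fin.snoc_castSucc, hl]
        exact hstep
      · rw [Fin.succ_castSucc, Fin.snoc_castSucc, Fin.snoc_castSucc]
        exact hs i

lemma chain_N {l : ℕ} {w : Fin (l + 1) → Fin 3 → ℕ}
    (hs : ∀ a : Fin l, Step (w a.castSucc) (w a.succ)) :
    ∀ k (hk : k < l + 1), Nval (w ⟨k, hk⟩) = Nval (w 0) := by
  intro k
  induction k with
  | zero => intro hk; rfl
  | succ k ih =>
    intro hk
    have hk' : k < l := by omega
    exact (step_N (hs ⟨k, hk'⟩)).symm.trans (ih (by omega))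



/-- `ρ = {((3,0,0),(0,2,0)), ((4,4,0),(0,0,3))}` is a presentation of
`S = ⟨6,9,20⟩`: any two factorizations of any element are connected by a sequence of
trades from `ρ`. -/
theorem stmt13 (φ : (Fin 3 → ℕ) → ℕ)
    (hφ : ∀ z, φ z = 6 * z 0 + 9 * z 1 + 20 * z 2) :
    ∀ z z' : Fin 3 → ℕ, φ z = φ z' →
      ∃ (l : ℕ) (w : Fin (l + 1) → (Fin 3 → ℕ)),
        w 0 = z ∧ w (Fin.last l) = z' ∧
        (∀ a : Fin (l + 1), φ (w a) = φ z) ∧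
        (∀ a : Fin l,
          ((fun j => w a.castSucc j - min (w a.castSucc j) (w a.succ j)) = ![3, 0, 0] ∧
            (fun j => w a.succ j - min (w a.castSucc j) (w a.succ j)) = ![0, 2, 0]) ∨
          ((fun j => w a.castSucc j - min (w a.castSucc j) (w a.succ j)) = ![0, 2, 0] ∧
            (fun j => w a.succ j - min (w a.castSucc j) (w a.succ j)) = ![3, 0, 0]) ∨
          ((fun j => w a.castSucc j - min (w a.castSucc j) (w a.succ j)) = ![4, 4, 0] ∧
            (fun j => w a.succ j - min (w a.castSucc j) (w a.succ j)) = ![0, 0, 3]) ∨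
          ((fun j => w a.castSucc j - min (w a.castSucc j) (w a.succ j)) = ![0, 0, 3] ∧
            (fun j => w a.succ j - min (w a.castSucc j) (w a.succ j)) = ![4, 4, 0])) := by
  intro z z' h
  obtain ⟨u, ru, hu0, hu2⟩ := myNormalize z
  obtain ⟨v, rv, hv0, hv2⟩ := myNormalize z'
  have hN : Nval z = Nval z' := by
    have p1 := hφ z; have p2 := hφ z'
    unfold Nval; omega
  have h1 := reach_N ru
  have h2 := reach_N rv
  have huv : u = v := by
    have e0 : u 0 = v 0 ∧ u 1 = v 1 ∧ u 2 = v 2 := by unfold Nval at h1 h2 hN; omega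
    funext j; fin_cases j
    · exact e0.1
    · exact e0.2.1
    · exact e0.2.2
  have rv' : Reach v z' := (@Relation.ReflTransGen.stdSymm _ Step ⟨step_symm⟩).symm _ _ rv
  have R : Reach z z' := ru.trans (by rw [huv]; exact rv')
  obtain ⟨l, w, h0, hl, hs⟩ := chain_of_reach R
  refine ⟨l, w, h0, hl, ?_, hs⟩
  intro a
  have key := chain_N hs a.1 a.2
  rw [h0] at key
  rw [hφ, hφ]
  unfold Nval at key
  exact key
end

section
/- For distinct m, n ∈ [k], the principal order ideal in the ordered poset of disjoint supports P_k generated by the maximal element ({m},{n}) — that is, the set {(I,J) : I,J ⊆ [k] nonempty proper disjoint, m ∈ I, n ∈ J} ∪ {0̂} — is isomorphic as a poset to the face lattice of the (k−2)-dimensional cube. -/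
/-- The principal ideal of the ordered poset of disjoint supports `P_k` generated by the
maximal element `({m},{n})`: ordered pairs `(I,J)` of nonempty, proper, disjoint subsets
of `[k]` with `m ∈ I` and `n ∈ J`, together with the bottom element `0̂` (`none`). -/
def PrincipalIdealDS (k : ℕ) (m n : Fin k) :=
  Option {p : Finset (Fin k) × Finset (Fin k) //
    p.1.Nonempty ∧ p.2.Nonempty ∧ p.1 ≠ Finset.univ ∧ p.2 ≠ Finset.univ ∧
      Disjoint p.1 p.2 ∧ m ∈ p.1 ∧ n ∈ p.2}

/-- The order on the principal ideal: `0̂` is minimum, and `(R,T) ≼ (I,J)` when `I ⊆ R`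
and `J ⊆ T`. -/
def leDS {k : ℕ} {m n : Fin k} : PrincipalIdealDS k m n → PrincipalIdealDS k m n → Prop
  | none, _ => True
  | some _, none => False
  | some p, some q => q.1.1 ⊆ p.1.1 ∧ q.1.2 ⊆ p.1.2

/-- The face lattice of the `d`-cube: a face is a pair `(A,B)` of disjoint subsets of `[d]`
(the coordinates fixed to `0` and to `1` respectively), plus a bottom element (`none`) for
the empty face. -/
def CubeFaceLattice (d : ℕ) :=
  Option {p : Finset (Fin d) × Finset (Fin d) // Disjoint p.1 p.2}

/-- The order on cube faces: the empty face is minimum, and a face is contained in another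
when it fixes more coordinates. -/
def leCube {d : ℕ} : CubeFaceLattice d → CubeFaceLattice d → Prop
  | none, _ => True
  | some _, none => False
  | some p, some q => q.1.1 ⊆ p.1.1 ∧ q.1.2 ⊆ p.1.2

/-- for distinct `m, n ∈ [k]`, the principal ideal of `P_k` generated by
`({m},{n})` is isomorphic as a poset to the face lattice of the `(k−2)`-cube. -/
theorem stmt16 (k : ℕ) (m n : Fin k) (hmn : m ≠ n) :
    ∃ f : PrincipalIdealDS k m n ≃ CubeFaceLattice (k - 2),
      ∀ x y, leDS x y ↔ leCube (f x) (f y) := by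
  classical
  have hcard : ({m, n}ᶜ : Finset (Fin k)).card = k - 2 := by
    rw [Finset.card_compl, Finset.card_insert_of_notMem (by simp [hmn]),
      Finset.card_singleton]
    simp
  let e := Finset.equivFinOfCardEq hcard
  let g : Fin (k - 2) → Fin k := fun a => (e.symm a : Fin k)
  have hginj : Function.Injective g := fun a b h => e.symm.injective (Subtype.ext h)
  have hgm : ∀ a, g a ≠ m ∧ g a ≠ n := by
    intro a
    have := (e.symm a).2
    simp only [Finset.mem_compl, Finset.mem_insert, Finset.mem_singleton] at this
    exact ⟨fun h => this (Or.inl h), fun h => this (Or.inr h)⟩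
  have hsurj : ∀ x : Fin k, x ≠ m → x ≠ n → ∃ a, g a = x := by
    intro x h1 h2
    exact ⟨e ⟨x, by simp [h1, h2]⟩, by simp [g]⟩
  let φ : Finset (Fin k) → Finset (Fin (k - 2)) :=
    fun I => Finset.univ.filter (fun a => g a ∈ I)
  let ψ : Finset (Fin (k - 2)) → Fin k → Finset (Fin k) :=
    fun A x => insert x (A.image g)
  have hmemφ : ∀ (I : Finset (Fin k)) (a), a ∈ φ I ↔ g a ∈ I := by
    intro I a; simp [φ]
  have hmemψ : ∀ (A : Finset (Fin (k - 2))) (x y), y ∈ ψ A x ↔ y = x ∨ ∃ a ∈ A, g a = y := by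
    intro A x y; simp [ψ, eq_comm]
  have hψφ : ∀ (I : Finset (Fin k)) (x : Fin k), x ∈ I →
      (∀ y ∈ I, y ≠ x → y ≠ m ∧ y ≠ n) → ψ (φ I) x = I := by
    intro I x hxI hI
    ext y
    rw [hmemψ]
    constructor
    · rintro (rfl | ⟨a, ha, rfl⟩)
      · exact hxI
      · exact (hmemφ I a).1 ha
    · intro hy
      by_cases hyx : y = x
      · exact Or.inl hyx
      · obtain ⟨h1, h2⟩ := hI y hy hyx
        obtain ⟨a, rfl⟩ := hsurj y h1 h2
        exact Or.inr ⟨a, (hmemφ I a).2 hy, rfl⟩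
  have hφψ : ∀ (A : Finset (Fin (k - 2))) (x : Fin k), x = m ∨ x = n → φ (ψ A x) = A := by
    intro A x hx
    ext a
    rw [hmemφ, hmemψ]
    constructor
    · rintro (h | ⟨b, hb, hba⟩)
      · rcases hx with rfl | rfl
        · exact absurd h (hgm a).1
        · exact absurd h (hgm a).2
      · rwa [hginj hba] at hb
    · intro ha; exact Or.inr ⟨a, ha, rfl⟩
  let F : {p : Finset (Fin k) × Finset (Fin k) //
      p.1.Nonempty ∧ p.2.Nonempty ∧ p.1 ≠ Finset.univ ∧ p.2 ≠ Finset.univ ∧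
        Disjoint p.1 p.2 ∧ m ∈ p.1 ∧ n ∈ p.2} →
      {p : Finset (Fin (k - 2)) × Finset (Fin (k - 2)) // Disjoint p.1 p.2} :=
    fun p => ⟨(φ p.1.1, φ p.1.2), by
      rw [Finset.disjoint_left]
      intro a ha hb
      exact (Finset.disjoint_left.1 p.2.2.2.2.2.1) ((hmemφ _ a).1 ha) ((hmemφ _ a).1 hb)⟩
  let G : {p : Finset (Fin (k - 2)) × Finset (Fin (k - 2)) // Disjoint p.1 p.2} →
      {p : Finset (Fin k) × Finset (Fin k) //
      p.1.Nonempty ∧ p.2.Nonempty ∧ p.1 ≠ Finset.univ ∧ p.2 ≠ Finset.univ ∧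
        Disjoint p.1 p.2 ∧ m ∈ p.1 ∧ n ∈ p.2} :=
    fun q => ⟨(ψ q.1.1 m, ψ q.1.2 n), by
      refine ⟨⟨m, Finset.mem_insert_self _ _⟩, ⟨n, Finset.mem_insert_self _ _⟩, ?_, ?_, ?_,
        Finset.mem_insert_self _ _, Finset.mem_insert_self _ _⟩
      · intro h
        replace h : ψ q.1.1 m = Finset.univ := h
        have hn : n ∈ ψ q.1.1 m := by rw [h]; exact Finset.mem_univ n
        rcases (hmemψ _ _ _).1 hn with h' | ⟨a, _, ha⟩
        · exact hmn h'.symm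
        · exact (hgm a).2 ha
      · intro h
        replace h : ψ q.1.2 n = Finset.univ := h
        have hm : m ∈ ψ q.1.2 n := by rw [h]; exact Finset.mem_univ m
        rcases (hmemψ _ _ _).1 hm with h' | ⟨a, _, ha⟩
        · exact hmn h'
        · exact (hgm a).1 ha
      · rw [Finset.disjoint_left]
        intro x hx hy
        rcases (hmemψ _ _ _).1 hx with rfl | ⟨a, ha, rfl⟩
        · rcases (hmemψ _ _ _).1 hy with h' | ⟨b, _, hb⟩
          · exact hmn h'
          · exact (hgm b).1 hb
        · rcases (hmemψ _ _ _).1 hy with h' | ⟨b, hb, hb'⟩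
          · exact (hgm a).2 h'
          · exact (Finset.disjoint_left.1 q.2) ha (hginj hb' ▸ hb)⟩
  have hGF : ∀ p, G (F p) = p := by
    intro p
    obtain ⟨⟨I, J⟩, h1, h2, h3, h4, h5, h6, h7⟩ := p
    have hnI : n ∉ I := fun h => (Finset.disjoint_left.1 h5) h h7
    have hmJ : m ∉ J := fun h => (Finset.disjoint_left.1 h5) h6 h
    apply Subtype.ext
    show (ψ (φ I) m, ψ (φ J) n) = (I, J)
    rw [hψφ I m h6 (fun y hy hym => ⟨hym, fun h => hnI (h ▸ hy)⟩),
      hψφ J n h7 (fun y hy hyn => ⟨fun h => hmJ (h ▸ hy), hyn⟩)]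
  have hFG : ∀ q, F (G q) = q := by
    intro q
    obtain ⟨⟨A, B⟩, hd⟩ := q
    apply Subtype.ext
    show (φ (ψ A m), φ (ψ B n)) = (A, B)
    rw [hφψ A m (Or.inl rfl), hφψ B n (Or.inr rfl)]
  have hmono : ∀ I I' : Finset (Fin k), I ⊆ I' → φ I ⊆ φ I' := by
    intro I I' h a ha
    exact (hmemφ I' a).2 (h ((hmemφ I a).1 ha))
  have hback : ∀ (I I' : Finset (Fin k)) (x : Fin k), x ∈ I' →
      (∀ y ∈ I, y ≠ x → y ≠ m ∧ y ≠ n) → φ I ⊆ φ I' → I ⊆ I' := by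
    intro I I' x hxI' hI h y hy
    by_cases hyx : y = x
    · exact hyx ▸ hxI'
    · obtain ⟨h1, h2⟩ := hI y hy hyx
      obtain ⟨a, rfl⟩ := hsurj y h1 h2
      exact (hmemφ I' a).1 (h ((hmemφ I a).2 hy))
  refine ⟨Equiv.optionCongr ⟨F, G, hGF, hFG⟩, ?_⟩
  rintro (_ | p) (_ | q)
  · exact Iff.rfl
  · exact Iff.rfl
  · exact Iff.rfl
  · show (q.1.1 ⊆ p.1.1 ∧ q.1.2 ⊆ p.1.2) ↔
      ((F q).1.1 ⊆ (F p).1.1 ∧ (F q).1.2 ⊆ (F p).1.2)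
    obtain ⟨⟨I, J⟩, h1, h2, h3, h4, h5, h6, h7⟩ := p
    obtain ⟨⟨I', J'⟩, h1', h2', h3', h4', h5', h6', h7'⟩ := q
    have hnI' : n ∉ I' := fun h => (Finset.disjoint_left.1 h5') h h7'
    have hmJ' : m ∉ J' := fun h => (Finset.disjoint_left.1 h5') h6' h
    constructor
    · rintro ⟨ha, hb⟩; exact ⟨hmono _ _ ha, hmono _ _ hb⟩
    · rintro ⟨ha, hb⟩
      exact ⟨hback I' I m h6 (fun y hy hym => ⟨hym, fun h => hnI' (h ▸ hy)⟩) ha,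
        hback J' J n h7 (fun y hy hyn => ⟨fun h => hmJ' (h ▸ hy), hyn⟩) hb⟩
end
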